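/- Derivative of the objective under mass transfer: fix a row m, clusters q ≠ s, and 0 < v ≤ 1. Suppose the impurity functional F is (Fréchet) differentiable at each p_{XT}(·,h) with partial derivatives c_h^n = ∂F/∂v_n evaluated at p_{XT}(·,h), and each g_k is differentiable at p_Z(k) with d_k = g_k'(p_Z(k)). Define I(t) = β · ∑_h F(p_{XT}(·,h) + t·v·(A q → s shift)_h) + g_q(p_Z(q) − t·v·p_{Y_m}) + g_s(p_Z(s) + t·v·p_{Y_m}), where the shift vector at output h is (fun n => v·(p n m)·(A s h − A q h)) scaled by t. Then I is differentiable at t = 0 and I'(0) = v·(D(m,s) − D(m,q)), where D(m,k) = β · ∑_h ∑_n c_h^n · (p n m) · A k h + d_k · p_{Y_m}. -/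

import Mathlib

def simplex (N : ℕ) : Set (Fin N → ℝ) := {q | (∀ n, 0 ≤ q n) ∧ ∑ n, q n = 1}

/-- `f` is concave on the standard probability simplex. -/
def ConcaveOnSimplex {N : ℕ} (f : (Fin N → ℝ) → ℝ) : Prop :=
  ∀ a ∈ simplex N, ∀ b ∈ simplex N, ∀ lam : ℝ, lam ∈ Set.Icc (0:ℝ) 1 →
    lam * f a + (1 - lam) * f b ≤ f (lam • a + (1 - lam) • b)

/-- The impurity functional `F(v) = (∑ n, v n) * f (v / ∑ n, v n)`. -/
noncomputable def impurity {N : ℕ} (f : (Fin N → ℝ) → ℝ) (v : Fin N → ℝ) : ℝ :=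
  (∑ n, v n) * f (fun n => v n / ∑ m, v m)

/-- A joint distribution on `Fin N × Fin M`. -/
def IsJointDist {N M : ℕ} (p : Fin N → Fin M → ℝ) : Prop :=
  (∀ n m, 0 ≤ p n m) ∧ ∑ n, ∑ m, p n m = 1

/-- A row-stochastic matrix. -/
def RowStochastic {M K : ℕ} (Q : Fin M → Fin K → ℝ) : Prop :=
  (∀ m k, 0 ≤ Q m k) ∧ ∀ m, ∑ k, Q m k = 1

/-- Marginal of the data `Y`: `p_{Y_m} = ∑ n, p n m`. -/
noncomputable def pY {N M : ℕ} (p : Fin N → Fin M → ℝ) (m : Fin M) : ℝ := ∑ n, p n m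

/-- Joint distribution of the source and the quantizer output. -/
noncomputable def pXZ {N M K : ℕ} (p : Fin N → Fin M → ℝ) (Q : Fin M → Fin K → ℝ)
    (n : Fin N) (k : Fin K) : ℝ := ∑ m, p n m * Q m k

/-- Marginal of the quantizer output. -/
noncomputable def pZ {N M K : ℕ} (p : Fin N → Fin M → ℝ) (Q : Fin M → Fin K → ℝ)
    (k : Fin K) : ℝ := ∑ n, pXZ p Q n k

/-- Joint distribution of the source and the channel output. -/
noncomputable def pXT {N M K H : ℕ} (p : Fin N → Fin M → ℝ) (Q : Fin M → Fin K → ℝ)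
    (A : Fin K → Fin H → ℝ) (n : Fin N) (h : Fin H) : ℝ := ∑ k, pXZ p Q n k * A k h

/-- The objective `J(Q) = β ∑_h F(p_{XT}(·,h)) + ∑_k g_k(p_Z(k))`. -/
noncomputable def J {N M K H : ℕ} (β : ℝ) (f : (Fin N → ℝ) → ℝ) (g : Fin K → ℝ → ℝ)
    (p : Fin N → Fin M → ℝ) (A : Fin K → Fin H → ℝ) (Q : Fin M → Fin K → ℝ) : ℝ :=
  β * ∑ h, impurity f (fun n => pXT p Q A n h) + ∑ k, g k (pZ p Q k)

/-- A deterministic (hard) quantizer. -/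
def Deterministic {M K : ℕ} (Q : Fin M → Fin K → ℝ) : Prop :=
  ∀ m, ∃ k, Q m k = 1 ∧ ∀ k', k' ≠ k → Q m k' = 0

/-- Derivative of the objective under mass transfer. -/
theorem stmt_5 {N M K H : ℕ}
    (β : ℝ) (hβ : 0 < β)
    (p : Fin N → Fin M → ℝ) (hp : IsJointDist p)
    (Q : Fin M → Fin K → ℝ) (hQ : RowStochastic Q)
    (A : Fin K → Fin H → ℝ) (hA : RowStochastic A)
    (f : (Fin N → ℝ) → ℝ) (hf : ConcaveOnSimplex f)
    (g : Fin K → ℝ → ℝ) (hg : ∀ k, ConcaveOn ℝ Set.univ (g k))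
    (m : Fin M) (q s : Fin K) (hqs : q ≠ s)
    (v : ℝ) (hv : 0 < v) (hv1 : v ≤ 1)
    (Dh : Fin H → ((Fin N → ℝ) →L[ℝ] ℝ))
    (hFd : ∀ h, HasFDerivAt (impurity f) (Dh h) (fun n => pXT p Q A n h))
    (c : Fin H → Fin N → ℝ) (hc : ∀ h n, Dh h (Pi.single n 1) = c h n)
    (d : Fin K → ℝ) (hgd : ∀ k, HasDerivAt (g k) (d k) (pZ p Q k)) :
    HasDerivAt (fun t : ℝ =>
        β * ∑ h, impurity f (fun n => pXT p Q A n h + t * (v * p n m * (A s h - A q h)))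
          + g q (pZ p Q q - t * (v * pY p m)) + g s (pZ p Q s + t * (v * pY p m)))
      (v * ((β * ∑ h, ∑ n, c h n * p n m * A s h + d s * pY p m)
          - (β * ∑ h, ∑ n, c h n * p n m * A q h + d q * pY p m))) 0 := by

  classical
  -- weight vector for each h
  set w : Fin H → Fin N → ℝ := fun h n => v * p n m * (A s h - A q h) with hw
  -- derivative of each impurity term
  have himp : ∀ h, HasDerivAt
      (fun t : ℝ => impurity f (fun n => pXT p Q A n h + t * w h n)) (Dh h (w h)) 0 := by
    intro h
    have hinner : HasDerivAt
        (fun t : ℝ => (fun n => pXT p Q A n h + t * w h n)) (w h) 0 := by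
      have heq : (fun t : ℝ => (fun n => pXT p Q A n h + t * w h n))
          = fun t : ℝ => (fun n => pXT p Q A n h) + t • w h := by
        funext t; funext n; simp
      rw [heq]
      simpa using (((hasDerivAt_id (0:ℝ)).smul_const (w h)).const_add
        (fun n => pXT p Q A n h))
    have hFd' : HasFDerivAt (impurity f) (Dh h)
        ((fun t : ℝ => (fun n => pXT p Q A n h + t * w h n)) 0) := by
      simpa using hFd h
    exact hFd'.comp_hasDerivAt 0 hinner
  have hsum : HasDerivAt
      (fun t : ℝ => ∑ h, impurity f (fun n => pXT p Q A n h + t * w h n))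
      (∑ h, Dh h (w h)) 0 := HasDerivAt.fun_sum (fun h _ => himp h)
  have h1 : HasDerivAt
      (fun t : ℝ => β * ∑ h, impurity f (fun n => pXT p Q A n h + t * w h n))
      (β * ∑ h, Dh h (w h)) 0 := hsum.const_mul β
  -- g q term
  have hq : HasDerivAt (fun t : ℝ => g q (pZ p Q q - t * (v * pY p m)))
      (d q * (-(v * pY p m))) 0 := by
    have hinner : HasDerivAt (fun t : ℝ => pZ p Q q - t * (v * pY p m))
        (-(v * pY p m)) 0 := by
      simpa using ((hasDerivAt_id (0:ℝ)).mul_const (v * pY p m)).const_sub (pZ p Q q)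
    have hgd' : HasDerivAt (g q) (d q) ((fun t : ℝ => pZ p Q q - t * (v * pY p m)) 0) := by
      simpa using hgd q
    exact HasDerivAt.comp (0:ℝ) hgd' hinner
  have hs : HasDerivAt (fun t : ℝ => g s (pZ p Q s + t * (v * pY p m)))
      (d s * (v * pY p m)) 0 := by
    have hinner : HasDerivAt (fun t : ℝ => pZ p Q s + t * (v * pY p m))
        (v * pY p m) 0 := by
      simpa using (((hasDerivAt_id (0:ℝ)).mul_const (v * pY p m)).const_add (pZ p Q s))
    have hgd' : HasDerivAt (g s) (d s) ((fun t : ℝ => pZ p Q s + t * (v * pY p m)) 0) := by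
      simpa using hgd s
    exact HasDerivAt.comp (0:ℝ) hgd' hinner
  have htot := (h1.add hq).add hs
  -- compute Dh h (w h)
  have hDw : ∀ h, Dh h (w h) = ∑ n, w h n * c h n := by
    intro h
    have hw2 : w h = ∑ n, w h n • (Pi.single n 1 : Fin N → ℝ) := by
      funext j
      simp [Pi.single_apply, eq_comm]
    conv_lhs => rw [hw2]
    rw [map_sum]
    exact Finset.sum_congr rfl fun n _ => by rw [map_smul, hc]; simp [smul_eq_mul]
  have hval : β * ∑ h, Dh h (w h) + d q * (-(v * pY p m)) + d s * (v * pY p m)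
      = v * ((β * ∑ h, ∑ n, c h n * p n m * A s h + d s * pY p m)
          - (β * ∑ h, ∑ n, c h n * p n m * A q h + d q * pY p m)) := by
    have hh : ∀ h, Dh h (w h)
        = v * (∑ n, c h n * p n m * A s h) - v * (∑ n, c h n * p n m * A q h) := by
      intro h
      rw [hDw h, Finset.mul_sum, Finset.mul_sum, ← Finset.sum_sub_distrib]
      exact Finset.sum_congr rfl (fun n _ => by simp [hw]; ring)
    have hsumD : ∑ h, Dh h (w h)
        = v * (∑ h, ∑ n, c h n * p n m * A s h) - v * (∑ h, ∑ n, c h n * p n m * A q h) := by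
      rw [Finset.mul_sum, Finset.mul_sum, ← Finset.sum_sub_distrib]
      exact Finset.sum_congr rfl fun h _ => hh h
    rw [hsumD]; ring
  rw [← hval]
  exact htot
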